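/- Let f be a polynomial with complex coefficients, let a < b be real, and let ρ : (a, b) → ℝ be differentiable with ρ(θ) > 0 and Im f(ρ(θ)·exp(i θ)) = 0 for all θ ∈ (a, b). Define β(θ) = i·ρ(θ)·exp(i θ)·f′(ρ(θ)·exp(i θ)) and assume Re β(θ) ≠ 0 for all θ ∈ (a, b). Then for all θ ∈ (a, b): ρ′(θ) = ρ(θ)·Im β(θ) / Re β(θ), and the function x(θ) = Re f(ρ(θ)·exp(i θ)) is differentiable with x′(θ) = |β(θ)|² / Re β(θ). -/

import Mathlib

theorem crossing_ode_in_theta (f : Polynomial ℂ) (a b : ℝ) (hab : a < b)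
    (ρ : ℝ → ℝ) (hρ : DifferentiableOn ℝ ρ (Set.Ioo a b))
    (hρpos : ∀ θ ∈ Set.Ioo a b, 0 < ρ θ)
    (him : ∀ θ ∈ Set.Ioo a b, (f.eval ((ρ θ : ℂ) * Complex.exp (Complex.I * θ))).im = 0)
    (β : ℝ → ℂ)
    (hβ : ∀ θ : ℝ, β θ = Complex.I * (ρ θ) * Complex.exp (Complex.I * θ) *
        f.derivative.eval ((ρ θ : ℂ) * Complex.exp (Complex.I * θ)))
    (hβre : ∀ θ ∈ Set.Ioo a b, (β θ).re ≠ 0) :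
    ∀ θ ∈ Set.Ioo a b,
      derivWithin ρ (Set.Ioo a b) θ = ρ θ * (β θ).im / (β θ).re ∧
      DifferentiableWithinAt ℝ
        (fun u : ℝ => (f.eval ((ρ u : ℂ) * Complex.exp (Complex.I * u))).re)
        (Set.Ioo a b) θ ∧
      derivWithin (fun u : ℝ => (f.eval ((ρ u : ℂ) * Complex.exp (Complex.I * u))).re)
        (Set.Ioo a b) θ = ‖β θ‖ ^ 2 / (β θ).re := by
  intro θ hθ
  have hnhds : Set.Ioo a b ∈ nhds θ := isOpen_Ioo.mem_nhds hθ
  have hρd : DifferentiableAt ℝ ρ θ := (hρ θ hθ).differentiableAt hnhds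
  set ρ' : ℝ := deriv ρ θ with hρ'def
  have hdw : derivWithin ρ (Set.Ioo a b) θ = ρ' := derivWithin_of_mem_nhds hnhds
  have hre : HasDerivAt (fun u : ℝ => ((ρ u : ℂ))) (ρ' : ℝ) θ := hρd.hasDerivAt.ofReal_comp
  have hIu : HasDerivAt (fun u : ℝ => Complex.I * (u : ℂ)) Complex.I θ := by
    simpa using ((hasDerivAt_id θ).ofReal_comp.const_mul Complex.I)
  have hexp : HasDerivAt (fun u : ℝ => Complex.exp (Complex.I * u))
      (Complex.exp (Complex.I * θ) * Complex.I) θ := hIu.cexp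
  have hz : HasDerivAt (fun u : ℝ => (ρ u : ℂ) * Complex.exp (Complex.I * u))
      ((ρ' : ℂ) * Complex.exp (Complex.I * θ) +
        (ρ θ : ℂ) * (Complex.exp (Complex.I * θ) * Complex.I)) θ := hre.mul hexp
  set z : ℂ := (ρ θ : ℂ) * Complex.exp (Complex.I * θ) with hzdef
  set g' : ℂ := f.derivative.eval z *
      ((ρ' : ℂ) * Complex.exp (Complex.I * θ) +
        (ρ θ : ℂ) * (Complex.exp (Complex.I * θ) * Complex.I)) with hg'def
  have hg : HasDerivAt (fun u : ℝ => f.eval ((ρ u : ℂ) * Complex.exp (Complex.I * u))) g' θ :=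
    by have := (f.hasDerivAt z).comp θ hz; exact this
  set c : ℂ := f.derivative.eval z * Complex.exp (Complex.I * θ) with hcdef
  have hβθ : β θ = (ρ θ : ℂ) * (Complex.I * c) := by rw [hβ]; rw [hcdef, hzdef]; ring
  have hgc : g' = (ρ' : ℂ) * c + β θ := by rw [hβθ, hg'def, hcdef]; ring
  -- re/im of β
  have hβre' : (β θ).re = -(ρ θ * c.im) := by
    rw [hβθ]; simp [Complex.mul_re]
  have hβim' : (β θ).im = ρ θ * c.re := by
    rw [hβθ]; simp [Complex.mul_im]
  -- imaginary part has zero derivative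
  have himd : HasDerivAt
      (fun u : ℝ => (f.eval ((ρ u : ℂ) * Complex.exp (Complex.I * u))).im) g'.im θ :=
    Complex.imCLM.hasFDerivAt.comp_hasDerivAt θ hg
  have him0 : HasDerivAt
      (fun u : ℝ => (f.eval ((ρ u : ℂ) * Complex.exp (Complex.I * u))).im) 0 θ := by
    refine (hasDerivAt_const θ (0:ℝ)).congr_of_eventuallyEq ?_
    filter_upwards [hnhds] with u hu using him u hu
  have hginzero : g'.im = 0 := himd.unique him0
  have e1 : ρ' * c.im + (β θ).im = 0 := by
    have := hginzero
    rw [hgc] at this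
    simpa [Complex.add_im, Complex.mul_im, Complex.mul_re] using this
  have hρθ : (0:ℝ) < ρ θ := hρpos θ hθ
  have hβr : (β θ).re ≠ 0 := hβre θ hθ
  have hcim : c.im ≠ 0 := by
    intro h; apply hβr; rw [hβre', h]; ring
  have hρ'eq : ρ' = ρ θ * (β θ).im / (β θ).re := by
    rw [hβre', hβim']
    field_simp
    nlinarith [e1, hβim']
  -- real part
  have hred : HasDerivAt
      (fun u : ℝ => (f.eval ((ρ u : ℂ) * Complex.exp (Complex.I * u))).re) g'.re θ :=
    Complex.reCLM.hasFDerivAt.comp_hasDerivAt θ hg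
  have hgre : g'.re = ρ' * c.re + (β θ).re := by
    rw [hgc]; simp [Complex.add_re, Complex.mul_re, Complex.mul_im]
  refine ⟨by rw [hdw, hρ'eq], hred.differentiableAt.differentiableWithinAt, ?_⟩
  rw [derivWithin_of_mem_nhds hnhds, hred.deriv, hgre]
  have habs : ‖β θ‖^2 = (β θ).re^2 + (β θ).im^2 := by
    rw [Complex.sq_norm, Complex.normSq_apply]; ring
  rw [habs, hρ'eq, hβim']
  field_simp
  ring
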